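/- arXiv:1408.3907 — 4 statements merged into one kernel-verified Lean document; each statement's English description precedes it below -/
import Mathlib

section
/- Let X be a compact metric space and Ψ_0, Ψ_1, …, Ψ_K : X → ℝ be continuous functions. Define σ* = sup over λ = (λ_1,…,λ_K) ∈ ℝ^K of { θ ∈ ℝ : θ ≤ Ψ_0(x) + Σ_{i=1}^K λ_i Ψ_i(x) for all x ∈ X }. If the only vector v = (v_1,…,v_K) ∈ ℝ^K satisfying 0 ≤ Σ_{i=1}^K v_i Ψ_i(x) for all x ∈ X is v = 0, then there exists λ* ∈ ℝ^K such that σ* ≤ Ψ_0(x) + Σ_{i=1}^K λ_i* Ψ_i(x) for all x ∈ X (i.e., the supremum is attained). -/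
open Finset

/-- The minimum-value function of a linearly parametrized family is well-defined
(attained) and continuous. -/
lemma aux_min {X : Type*} [MetricSpace X] [CompactSpace X] [Nonempty X]
    {K : ℕ} (g₀ : X → ℝ) (Ψ : Fin K → X → ℝ)
    (hg₀ : Continuous g₀) (hΨ : ∀ i, Continuous (Ψ i)) :
    ∃ G : (Fin K → ℝ) → ℝ, Continuous G ∧
      (∀ l x, G l ≤ g₀ x + ∑ i, l i * Ψ i x) ∧
      (∀ l, ∃ x, G l = g₀ x + ∑ i, l i * Ψ i x) := by
  set f : (Fin K → ℝ) → X → ℝ := fun l x => g₀ x + ∑ i, l i * Ψ i x with hf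
  have hfc : ∀ l, Continuous (f l) := fun l =>
    hg₀.add (continuous_finset_sum _ fun i _ => continuous_const.mul (hΨ i))
  have hmin : ∀ l : Fin K → ℝ, ∃ x, ∀ y, f l x ≤ f l y := by
    intro l
    obtain ⟨x, -, hx⟩ := isCompact_univ.exists_isMinOn Set.univ_nonempty
      (hfc l).continuousOn
    exact ⟨x, fun y => isMinOn_iff.mp hx y trivial⟩
  choose m hm using hmin
  -- a uniform bound on ∑ |Ψ i x|
  obtain ⟨x₀, -, hx₀⟩ := isCompact_univ.exists_isMaxOn Set.univ_nonempty
    (continuous_finset_sum (univ : Finset (Fin K))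
      (fun i _ => (hΨ i).abs)).continuousOn
  set C : ℝ := ∑ i, |Ψ i x₀| with hCdef
  have hC0 : 0 ≤ C := Finset.sum_nonneg fun i _ => abs_nonneg _
  have hC : ∀ x, ∑ i, |Ψ i x| ≤ C := fun x => isMaxOn_iff.mp hx₀ x trivial
  have key : ∀ (l μ : Fin K → ℝ) (x : X), f l x ≤ f μ x + dist l μ * C := by
    intro l μ x
    have h1 : f l x - f μ x = ∑ i, (l i - μ i) * Ψ i x := by
      simp only [hf]
      rw [add_sub_add_left_eq_sub, ← Finset.sum_sub_distrib]
      exact Finset.sum_congr rfl fun i _ => (sub_mul _ _ _).symm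
    have h2 : ∑ i, (l i - μ i) * Ψ i x ≤ ∑ i, dist l μ * |Ψ i x| := by
      refine Finset.sum_le_sum fun i _ => (le_abs_self _).trans ?_
      rw [abs_mul]
      have hd : |l i - μ i| ≤ dist l μ := by
        rw [← Real.dist_eq]; exact dist_le_pi_dist l μ i
      exact mul_le_mul_of_nonneg_right hd (abs_nonneg _)
    have h3 : ∑ i, dist l μ * |Ψ i x| = dist l μ * ∑ i, |Ψ i x| := by
      rw [Finset.mul_sum]
    have h4 : dist l μ * ∑ i, |Ψ i x| ≤ dist l μ * C := by
      exact mul_le_mul_of_nonneg_left (hC x) dist_nonneg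
    linarith [h1, h2]
  refine ⟨fun l => f l (m l), ?_, fun l x => hm l x, fun l => ⟨m l, rfl⟩⟩
  have hlip : LipschitzWith C.toNNReal (fun l => f l (m l)) := by
    refine LipschitzWith.of_dist_le_mul fun l μ => ?_
    have hle1 : f l (m l) ≤ f μ (m μ) + dist l μ * C :=
      (hm l (m μ)).trans (key l μ (m μ))
    have hle2 : f μ (m μ) ≤ f l (m l) + dist μ l * C :=
      (hm μ (m l)).trans (key μ l (m l))
    rw [dist_comm μ l] at hle2
    rw [Real.dist_eq, Real.coe_toNNReal C hC0, abs_le]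
    constructor <;> nlinarith [dist_nonneg (x := l) (y := μ)]
  exact hlip.continuous

/-- Existence of a solution of the semi-infinite LP dual problem (Lemma 4.1). -/
theorem stmt_0 {X : Type*} [MetricSpace X] [CompactSpace X] [Nonempty X]
    {K : ℕ} (Ψ₀ : X → ℝ) (Ψ : Fin K → X → ℝ)
    (hΨ₀ : Continuous Ψ₀) (hΨ : ∀ i, Continuous (Ψ i))
    (hind : ∀ v : Fin K → ℝ, (∀ x, 0 ≤ ∑ i, v i * Ψ i x) → v = 0) :
    ∃ lam : Fin K → ℝ, ∀ x,
      sSup {θ : ℝ | ∃ l : Fin K → ℝ, ∀ x', θ ≤ Ψ₀ x' + ∑ i, l i * Ψ i x'}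
        ≤ Ψ₀ x + ∑ i, lam i * Ψ i x := by
  obtain ⟨G, hGc, hGle, hGeq⟩ := aux_min Ψ₀ Ψ hΨ₀ hΨ
  obtain ⟨c, hcc, hcle', hceq'⟩ := aux_min (fun _ => (0:ℝ)) Ψ (continuous_const) hΨ
  have hcle : ∀ l x, c l ≤ ∑ i, l i * Ψ i x := by
    intro l x; simpa using hcle' l x
  have hceq : ∀ l, ∃ x, c l = ∑ i, l i * Ψ i x := by
    intro l; obtain ⟨x, hx⟩ := hceq' l; exact ⟨x, by simpa using hx⟩
  -- the key claim: G attains its maximum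
  have main : ∃ lam : Fin K → ℝ, ∀ l, G l ≤ G lam := by
    rcases Nat.eq_zero_or_pos K with hK | hK
    · refine ⟨0, fun l => ?_⟩
      have : l = 0 := by subst hK; funext i; exact i.elim0
      rw [this]
    · -- sphere argument
      haveI : Nonempty (Fin K) := ⟨⟨0, hK⟩⟩
      have hsne : (Metric.sphere (0 : Fin K → ℝ) 1).Nonempty :=
        NormedSpace.sphere_nonempty.mpr zero_le_one
      obtain ⟨u₀, hu₀s, hu₀⟩ := (isCompact_sphere (0 : Fin K → ℝ) 1).exists_isMaxOn
        hsne hcc.continuousOn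
      have hu₀norm : ‖u₀‖ = 1 := mem_sphere_zero_iff_norm.mp hu₀s
      have hcneg : c u₀ < 0 := by
        by_contra h
        push_neg at h
        have : u₀ = 0 := hind u₀ fun x => h.trans (hcle u₀ x)
        rw [this] at hu₀norm; simp at hu₀norm
      set ε : ℝ := -c u₀ with hεdef
      have hε : 0 < ε := by simp [hεdef]; linarith
      -- bound B of Ψ₀
      obtain ⟨xB, -, hxB⟩ := isCompact_univ.exists_isMaxOn Set.univ_nonempty
        hΨ₀.continuousOn
      set B : ℝ := Ψ₀ xB with hBdef
      have hB : ∀ x, Ψ₀ x ≤ B := fun x => isMaxOn_iff.mp hxB x trivial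
      -- coercivity
      have hcoer : ∀ l : Fin K → ℝ, l ≠ 0 → G l ≤ B - ε * ‖l‖ := by
        intro l hl
        have hln : ‖l‖ ≠ 0 := norm_ne_zero_iff.mpr hl
        have hlpos : 0 < ‖l‖ := norm_pos_iff.mpr hl
        set u : Fin K → ℝ := ‖l‖⁻¹ • l with hudef
        have hunorm : ‖u‖ = 1 := norm_smul_inv_norm hl
        have hus : u ∈ Metric.sphere (0 : Fin K → ℝ) 1 :=
          mem_sphere_zero_iff_norm.mpr hunorm
        have hcu : c u ≤ -ε := by
          have := isMaxOn_iff.mp hu₀ u hus; simp [hεdef]; linarith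
        -- c l ≤ ‖l‖ * c u
        obtain ⟨xu, hxu⟩ := hceq u
        have hcl : c l ≤ ‖l‖ * c u := by
          have h1 : c l ≤ ∑ i, l i * Ψ i xu := hcle l xu
          have h2 : ∑ i, l i * Ψ i xu = ‖l‖ * ∑ i, u i * Ψ i xu := by
            rw [Finset.mul_sum]
            refine Finset.sum_congr rfl fun i _ => ?_
            simp only [hudef, Pi.smul_apply, smul_eq_mul]
            field_simp
          rw [hxu]
          linarith [h1, h2.le]
        -- G l ≤ B + c l
        obtain ⟨xl, hxl⟩ := hceq l
        have hGl : G l ≤ B + c l := by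
          have := hGle l xl
          rw [hxl]
          linarith [hB xl]
        have : ‖l‖ * c u ≤ ‖l‖ * (-ε) := mul_le_mul_of_nonneg_left hcu (norm_nonneg l)
        nlinarith
      -- maximize over a compact ball
      set R : ℝ := max ((B - G 0) / ε) 0 with hRdef
      have hR0 : (0:ℝ) ≤ R := le_max_right _ _
      obtain ⟨lam, hlamm, hlam⟩ := (isCompact_closedBall (0 : Fin K → ℝ) R).exists_isMaxOn
        ⟨0, by simp [hR0]⟩ hGc.continuousOn
      refine ⟨lam, fun l => ?_⟩
      by_cases hl : l ∈ Metric.closedBall (0 : Fin K → ℝ) R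
      · exact isMaxOn_iff.mp hlam l hl
      · have hln : R < ‖l‖ := by
          simpa [Metric.mem_closedBall, dist_zero_right] using
            lt_of_not_ge (fun h => hl (by simpa [Metric.mem_closedBall, dist_zero_right] using h))
        have hlne : l ≠ 0 := by
          intro h; rw [h] at hln; simp at hln; linarith
        have h1 : G l ≤ B - ε * ‖l‖ := hcoer l hlne
        have h2 : ε * R < ε * ‖l‖ := mul_lt_mul_of_pos_left hln hε
        have h3 : (B - G 0) / ε ≤ R := le_max_left _ _
        have h4 : B - G 0 ≤ ε * R := by
          have heq : B - G 0 = ε * ((B - G 0) / ε) := by field_simp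
          rw [heq]; exact mul_le_mul_of_nonneg_left h3 hε.le
        have h5 : G 0 ≤ G lam := isMaxOn_iff.mp hlam 0 (by simp [hR0])
        linarith
  obtain ⟨lam, hlam⟩ := main
  refine ⟨lam, fun x => ?_⟩
  refine csSup_le ⟨G 0, 0, fun x' => by simpa using hGle 0 x'⟩ ?_
  rintro θ ⟨l, hθ⟩
  obtain ⟨xl, hxl⟩ := hGeq l
  calc θ ≤ G l := by rw [hxl]; exact hθ xl
    _ ≤ G lam := hlam l
    _ ≤ Ψ₀ x + ∑ i, lam i * Ψ i x := hGle lam x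
end

section
/- Let Z ⊂ ℝⁿ be compact, F a compact metric space of pairs (μ, z) with second coordinate z ∈ Z, and G̃ : F → ℝ continuous. Suppose ζ* : ℝⁿ → ℝ is continuously differentiable and satisfies G̃* ≤ G̃(μ, z) + ∇ζ*(z)ᵀ g̃(μ, z) for all (μ, z) ∈ F, where g̃ : F → ℝⁿ is continuous. Then for every admissible pair (μ(·), z(·)) of the averaged system (z absolutely continuous with values in Z, z'(t) = g̃(μ(t), z(t)) a.e., (μ(t), z(t)) ∈ F for a.e. t), one has liminf_{T→∞} (1/T) ∫₀^T G̃(μ(t), z(t)) dt ≥ G̃*. -/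
open MeasureTheory Filter Set
open scoped RealInnerProductSpace

set_option maxHeartbeats 2000000 in
/-- A smooth dual-feasible function ζ* with value G̃* bounds from below the long-run
average cost along any admissible pair of the averaged system. -/
theorem stmt_3 {n : ℕ} {M : Type*} [MetricSpace M]
    (Z : Set (EuclideanSpace ℝ (Fin n))) (hZ : IsCompact Z)
    (F : Set (M × EuclideanSpace ℝ (Fin n))) (hFcomp : IsCompact F)
    (hFZ : ∀ w ∈ F, w.2 ∈ Z)
    (Gt : M × EuclideanSpace ℝ (Fin n) → ℝ) (hGt : ContinuousOn Gt F)
    (gt : M × EuclideanSpace ℝ (Fin n) → EuclideanSpace ℝ (Fin n)) (hgt : ContinuousOn gt F)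
    (ζ : EuclideanSpace ℝ (Fin n) → ℝ) (hζ : ContDiff ℝ 1 ζ)
    (Gstar : ℝ)
    (hdual : ∀ w ∈ F, Gstar ≤ Gt w + ⟪gradient ζ w.2, gt w⟫)
    (μ : ℝ → M) (z : ℝ → EuclideanSpace ℝ (Fin n))
    (hZmem : ∀ t ≥ (0:ℝ), z t ∈ Z)
    (hFmem : ∀ᵐ t ∂(volume.restrict (Ici (0:ℝ))), (μ t, z t) ∈ F)
    (hint : ∀ T : ℝ, IntervalIntegrable (fun t => gt (μ t, z t)) volume 0 T)
    (hintG : ∀ T : ℝ, IntervalIntegrable (fun t => Gt (μ t, z t)) volume 0 T)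
    (hode : ∀ T ≥ (0:ℝ), z T = z 0 + ∫ t in (0:ℝ)..T, gt (μ t, z t)) :
    Gstar ≤ liminf (fun T : ℝ => (1 / T) * ∫ t in (0:ℝ)..T, Gt (μ t, z t)) atTop := by
  classical
  set g : ℝ → EuclideanSpace ℝ (Fin n) := fun t => gt (μ t, z t) with hg_def
  set Gf : ℝ → ℝ := fun t => Gt (μ t, z t) with hGf_def
  have hgi : ∀ a b : ℝ, IntervalIntegrable g volume a b := fun a b =>
    (hint a).symm.trans (hint b)
  set zc : ℝ → EuclideanSpace ℝ (Fin n) := fun T => z 0 + ∫ t in (0:ℝ)..T, g t with hzc_def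
  have hzc_cont : Continuous zc :=
    continuous_const.add (intervalIntegral.continuous_primitive hgi 0)
  have hzeq : ∀ t : ℝ, 0 ≤ t → z t = zc t := fun t ht => hode t ht
  have hzcZ : ∀ t : ℝ, 0 ≤ t → zc t ∈ Z := fun t ht => (hzeq t ht) ▸ hZmem t ht
  -- transfer of a.e. statements to subsets of `Ici 0`
  have hae_sub : ∀ {s : Set ℝ}, s ⊆ Ici (0:ℝ) → ∀ {p : ℝ → Prop},
      (∀ᵐ t ∂volume.restrict (Ici (0:ℝ)), p t) → (∀ᵐ t ∂volume.restrict s, p t) := by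
    intro s hs p hp
    exact hp.filter_mono (ae_mono (Measure.restrict_mono hs le_rfl))
  -- bound on g
  obtain ⟨C0, hC0⟩ := hFcomp.exists_bound_of_continuousOn hgt
  set C : ℝ := max C0 0 + 1 with hC_def
  have hCpos : (0:ℝ) < C := by positivity
  have hgC : ∀ w ∈ F, ‖gt w‖ ≤ C := fun w hw =>
    (hC0 w hw).trans (by simp only [hC_def]; linarith [le_max_left C0 (0:ℝ)])
  have hgae : ∀ᵐ t ∂volume.restrict (Ici (0:ℝ)), ‖g t‖ ≤ C :=
    hFmem.mono fun t ht => hgC _ ht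
  -- increments of zc
  have hsub : ∀ a b : ℝ, zc b - zc a = ∫ t in a..b, g t := by
    intro a b
    simp only [hzc_def, add_sub_add_left_eq_sub]
    exact intervalIntegral.integral_interval_sub_left (hgi 0 b) (hgi 0 a)
  have hlip : ∀ a b : ℝ, 0 ≤ a → a ≤ b → ‖zc b - zc a‖ ≤ C * (b - a) := by
    intro a b ha hab
    rw [hsub]
    have hbd : ∀ᵐ t ∂volume.restrict (Set.uIoc a b), ‖g t‖ ≤ C := by
      refine hae_sub ?_ hgae
      rw [uIoc_of_le hab]
      exact fun t ht => ha.trans ht.1.le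
    calc ‖∫ t in a..b, g t‖ ≤ |∫ _t in a..b, C| :=
          intervalIntegral.norm_integral_le_abs_of_norm_le hbd intervalIntegrable_const
      _ = C * (b - a) := by
          rw [intervalIntegral.integral_const, smul_eq_mul, abs_of_nonneg (by nlinarith),
            mul_comm]
  -- the derivative of ζ
  set A : EuclideanSpace ℝ (Fin n) → EuclideanSpace ℝ (Fin n) →L[ℝ] ℝ := fderiv ℝ ζ with hA_def
  have hA_cont : Continuous A := hζ.continuous_fderiv one_ne_zero
  have hinnerA : ∀ (x v : EuclideanSpace ℝ (Fin n)), ⟪gradient ζ x, v⟫ = A x v := by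
    intro x v
    simp [gradient, hA_def, InnerProductSpace.toDual_symm_apply]
  -- compact neighborhood of Z and bounds on A
  set K : Set (EuclideanSpace ℝ (Fin n)) := Metric.cthickening 1 Z with hK_def
  have hKcomp : IsCompact K := hZ.cthickening
  have hZK : Z ⊆ K := Metric.self_subset_cthickening Z
  obtain ⟨D0, hD0⟩ := hKcomp.exists_bound_of_continuousOn hA_cont.continuousOn
  set D : ℝ := max D0 0 with hD_def
  have hDnn : (0:ℝ) ≤ D := le_max_right _ _
  have hD : ∀ x ∈ K, ‖A x‖ ≤ D := fun x hx => (hD0 x hx).trans (le_max_left _ _)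
  -- the function φ
  set φ : ℝ → ℝ := fun t => A (zc t) (g t) with hφ_def
  have hφIoc : ∀ a b : ℝ, 0 ≤ a → a ≤ b → IntegrableOn φ (Ioc a b) volume := by
    intro a b ha hab
    have hg' : IntegrableOn g (Ioc a b) volume := (hgi a b).1
    have hmeas : AEStronglyMeasurable φ (volume.restrict (Ioc a b)) := by
      have h1 : AEStronglyMeasurable (fun t => (A (zc t), g t))
          (volume.restrict (Ioc a b)) :=
        ((hA_cont.comp hzc_cont).aestronglyMeasurable).prodMk hg'.aestronglyMeasurable
      exact (isBoundedBilinearMap_apply.continuous).comp_aestronglyMeasurable h1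
    refine Integrable.mono (hg'.norm.const_mul D) hmeas ?_
    filter_upwards [ae_restrict_mem measurableSet_Ioc] with t ht
    have hz : zc t ∈ Z := hzcZ t (ha.trans ht.1.le)
    calc ‖φ t‖ ≤ ‖A (zc t)‖ * ‖g t‖ := (A (zc t)).le_opNorm _
      _ ≤ D * ‖g t‖ := mul_le_mul_of_nonneg_right (hD _ (hZK hz)) (norm_nonneg _)
      _ ≤ ‖D * ‖g t‖‖ := le_abs_self _
  have hφii : ∀ a b : ℝ, 0 ≤ a → 0 ≤ b → IntervalIntegrable φ volume a b := by
    intro a b ha hb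
    rcases le_total a b with hab | hab
    · exact (intervalIntegrable_iff_integrableOn_Ioc_of_le hab).mpr (hφIoc a b ha hab)
    · exact ((intervalIntegrable_iff_integrableOn_Ioc_of_le hab).mpr (hφIoc b a hb hab)).symm
  have hφbd : ∀ᵐ t ∂volume.restrict (Ici (0:ℝ)), ‖φ t‖ ≤ D * C := by
    filter_upwards [hgae, ae_restrict_mem measurableSet_Ici] with t htg ht
    calc ‖φ t‖ ≤ ‖A (zc t)‖ * ‖g t‖ := (A (zc t)).le_opNorm _
      _ ≤ D * C := mul_le_mul (hD _ (hZK (hzcZ t ht))) htg (norm_nonneg _) hDnn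
  -- dual inequality, integrated
  have hGstar : ∀ T : ℝ, 0 ≤ T →
      Gstar * T ≤ (∫ t in (0:ℝ)..T, Gf t) + ∫ t in (0:ℝ)..T, φ t := by
    intro T hT
    have hae : (fun _ => Gstar) ≤ᵐ[volume.restrict (Icc (0:ℝ) T)] fun t => Gf t + φ t := by
      have h1 : ∀ᵐ t ∂volume.restrict (Icc (0:ℝ) T), (μ t, z t) ∈ F :=
        hae_sub Icc_subset_Ici_self hFmem
      filter_upwards [h1, ae_restrict_mem measurableSet_Icc] with t ht hmem
      have ht0 : (0:ℝ) ≤ t := hmem.1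
      have hAz : A (z t) = A (zc t) := by rw [hzeq t ht0]
      calc Gstar ≤ Gt (μ t, z t) + ⟪gradient ζ (z t), gt (μ t, z t)⟫ := hdual _ ht
        _ = Gf t + φ t := by rw [hinnerA, hAz]
    have h2 := intervalIntegral.integral_mono_ae_restrict hT intervalIntegrable_const
      ((hintG T).add (hφii 0 T le_rfl hT)) hae
    rw [intervalIntegral.integral_const,
      intervalIntegral.integral_add (hintG T) (hφii 0 T le_rfl hT)] at h2
    simpa [smul_eq_mul, mul_comm] using h2
  -- bound on |ζ| on Z
  obtain ⟨B0, hB0⟩ := hZ.exists_bound_of_continuousOn hζ.continuous.continuousOn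
  -- main quantitative estimate
  have main : ∀ ε : ℝ, 0 < ε → ∃ K' : ℝ, ∀ T : ℝ, 0 ≤ T →
      (∫ t in (0:ℝ)..T, φ t) ≤ K' + 2 * ε * C * T := by
    intro ε hε
    have hUC : UniformContinuousOn A K := hKcomp.uniformContinuousOn_of_continuous
      hA_cont.continuousOn
    rw [Metric.uniformContinuousOn_iff] at hUC
    obtain ⟨δ, hδpos, hδ⟩ := hUC ε hε
    set h : ℝ := min δ 1 / (2 * C) with hh_def
    have hminpos : 0 < min δ 1 := lt_min hδpos one_pos
    have hh : 0 < h := by positivity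
    have hCh : C * h = min δ 1 / 2 := by
      rw [hh_def]; field_simp
    have hChlt : C * h < min δ 1 := by rw [hCh]; linarith
    -- one step estimate
    have step : ∀ a : ℝ, 0 ≤ a →
        (∫ t in a..(a + h), φ t) ≤ (ζ (zc (a + h)) - ζ (zc a)) + ε * C * h + ε * C * h := by
      intro a ha
      have hb : a ≤ a + h := by linarith
      have hb0 : (0:ℝ) ≤ a + h := by linarith
      have hΔ : ‖zc (a + h) - zc a‖ ≤ C * h := by
        have := hlip a (a + h) ha hb
        simpa using this
      set s : Set (EuclideanSpace ℝ (Fin n)) := Metric.ball (zc a) (min δ 1) with hs_def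
      have hsK : s ⊆ K := (Metric.ball_subset_thickening (hzcZ a ha) _).trans
        (Metric.thickening_subset_cthickening_of_le (min_le_right _ _) _)
      have has : zc a ∈ s := Metric.mem_ball_self hminpos
      have hmem_s : ∀ t : ℝ, a ≤ t → t ≤ a + h → zc t ∈ s := by
        intro t h1 h2
        rw [hs_def, Metric.mem_ball, dist_eq_norm]
        calc ‖zc t - zc a‖ ≤ C * (t - a) := hlip a t ha h1
          _ ≤ C * h := by nlinarith
          _ < min δ 1 := hChlt
      have hbs : zc (a + h) ∈ s := hmem_s _ hb le_rfl
      have hAbound : ∀ x ∈ s, ‖A x - A (zc a)‖ ≤ ε := by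
        intro x hx
        have := hδ x (hsK hx) (zc a) (hsK has) (by
          have : dist x (zc a) < min δ 1 := hx
          exact this.trans_le (min_le_left _ _))
        rw [dist_eq_norm] at this
        exact this.le
      have hMVT : ‖ζ (zc (a + h)) - ζ (zc a) - A (zc a) (zc (a + h) - zc a)‖
          ≤ ε * ‖zc (a + h) - zc a‖ :=
        Convex.norm_image_sub_le_of_norm_fderiv_le'
          (fun x _ => (hζ.differentiable one_ne_zero).differentiableAt)
          hAbound (convex_ball _ _) has hbs
      -- split the integral
      have hψ : IntervalIntegrable (fun t => A (zc a) (g t)) volume a (a + h) :=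
        ⟨(A (zc a)).integrable_comp (hgi a (a + h)).1,
         (A (zc a)).integrable_comp (hgi a (a + h)).2⟩
      have hdiff : IntervalIntegrable (fun t => A (zc t) (g t) - A (zc a) (g t))
          volume a (a + h) := (hφii a (a + h) ha hb0).sub hψ
      have hsplit : (∫ t in a..(a + h), φ t)
          = (∫ t in a..(a + h), (A (zc t) (g t) - A (zc a) (g t)))
            + ∫ t in a..(a + h), A (zc a) (g t) := by
        rw [← intervalIntegral.integral_add hdiff hψ]
        apply intervalIntegral.integral_congr
        intro t _
        simp [hφ_def]
      have hfirst : ‖∫ t in a..(a + h), (A (zc t) (g t) - A (zc a) (g t))‖ ≤ ε * C * h := by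
        have hbd : ∀ᵐ t ∂volume.restrict (Set.uIoc a (a + h)),
            ‖A (zc t) (g t) - A (zc a) (g t)‖ ≤ ε * C := by
          have hgae' : ∀ᵐ t ∂volume.restrict (Set.uIoc a (a + h)), ‖g t‖ ≤ C := by
            refine hae_sub ?_ hgae
            rw [uIoc_of_le hb]
            exact fun t ht => ha.trans ht.1.le
          filter_upwards [hgae', ae_restrict_mem measurableSet_uIoc] with t htg ht
          rw [uIoc_of_le hb] at ht
          have hts : zc t ∈ s := hmem_s t ht.1.le ht.2
          calc ‖A (zc t) (g t) - A (zc a) (g t)‖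
              = ‖(A (zc t) - A (zc a)) (g t)‖ := by simp
            _ ≤ ‖A (zc t) - A (zc a)‖ * ‖g t‖ := (A (zc t) - A (zc a)).le_opNorm _
            _ ≤ ε * C := mul_le_mul (hAbound _ hts) htg (norm_nonneg _) hε.le
        calc ‖∫ t in a..(a + h), (A (zc t) (g t) - A (zc a) (g t))‖
            ≤ |∫ _t in a..(a + h), (ε * C)| :=
              intervalIntegral.norm_integral_le_abs_of_norm_le hbd intervalIntegrable_const
          _ = ε * C * h := by
              rw [intervalIntegral.integral_const, smul_eq_mul,
                abs_of_nonneg (by nlinarith [mul_nonneg hε.le hCpos.le])]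
              ring
      have hsecond : (∫ t in a..(a + h), A (zc a) (g t))
          ≤ (ζ (zc (a + h)) - ζ (zc a)) + ε * C * h := by
        have hcomm : (∫ t in a..(a + h), A (zc a) (g t))
            = A (zc a) (zc (a + h) - zc a) := by
          rw [(A (zc a)).intervalIntegral_comp_comm (hgi a (a + h)), hsub]
        rw [hcomm]
        have h1 : A (zc a) (zc (a + h) - zc a) - (ζ (zc (a + h)) - ζ (zc a))
            ≤ ε * ‖zc (a + h) - zc a‖ := by
          have := hMVT
          rw [Real.norm_eq_abs] at this
          have h2 := neg_abs_le (ζ (zc (a + h)) - ζ (zc a) - A (zc a) (zc (a + h) - zc a))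
          linarith [h2, this]
        have h3 : ε * ‖zc (a + h) - zc a‖ ≤ ε * (C * h) :=
          mul_le_mul_of_nonneg_left hΔ hε.le
        nlinarith
      have h5 : (∫ t in a..(a + h), (A (zc t) (g t) - A (zc a) (g t))) ≤ ε * C * h :=
        (le_abs_self _).trans (by rwa [← Real.norm_eq_abs])
      rw [hsplit]
      linarith
    -- telescoping
    have tel : ∀ N : ℕ, (∫ t in (0:ℝ)..(N * h), φ t)
        ≤ (ζ (zc (N * h)) - ζ (zc 0)) + 2 * ε * C * h * N := by
      intro N
      induction N with
      | zero => simp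
      | succ N ih =>
        have h0N : (0:ℝ) ≤ N * h := by positivity
        have hsplit := intervalIntegral.integral_add_adjacent_intervals
          (hφii 0 (N * h) le_rfl h0N) (hφii (N * h) (N * h + h) h0N (by positivity))
        have hstep := step (N * h) h0N
        have hcast : ((N + 1 : ℕ) : ℝ) * h = N * h + h := by push_cast; ring
        rw [hcast, ← hsplit]
        push_cast
        linarith
    -- global bound
    refine ⟨2 * B0 + D * C * h + 2 * ε * C * h, ?_⟩
    intro T hT
    set N : ℕ := ⌈T / h⌉₊ with hN_def
    have h0N : (0:ℝ) ≤ N * h := by positivity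
    have hTN : T ≤ N * h := by
      rw [← div_le_iff₀ hh]
      exact Nat.le_ceil (T / h)
    have hNT : (N : ℝ) * h ≤ T + h := by
      have h1 : (N : ℝ) < T / h + 1 := Nat.ceil_lt_add_one (by positivity)
      have h2 : (N : ℝ) * h ≤ (T / h + 1) * h := by nlinarith
      calc (N : ℝ) * h ≤ (T / h + 1) * h := h2
        _ = T + h := by field_simp
    have hsplitT : (∫ t in (0:ℝ)..T, φ t)
        = (∫ t in (0:ℝ)..(N * h), φ t) - ∫ t in T..(N * h), φ t := by
      rw [← intervalIntegral.integral_add_adjacent_intervals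
        (hφii 0 T le_rfl hT) (hφii T (N * h) hT h0N)]
      ring
    have hrem : ‖∫ t in T..(N * h), φ t‖ ≤ D * C * h := by
      have hbd : ∀ᵐ t ∂volume.restrict (Set.uIoc T (N * h)), ‖φ t‖ ≤ D * C := by
        refine hae_sub ?_ hφbd
        rw [uIoc_of_le hTN]
        exact fun t ht => hT.trans ht.1.le
      calc ‖∫ t in T..(N * h), φ t‖ ≤ |∫ _t in T..(N * h), (D * C)| :=
            intervalIntegral.norm_integral_le_abs_of_norm_le hbd intervalIntegrable_const
        _ = D * C * (N * h - T) := by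
            rw [intervalIntegral.integral_const, smul_eq_mul,
              abs_of_nonneg (by nlinarith [mul_nonneg hDnn hCpos.le]), mul_comm]
        _ ≤ D * C * h := by nlinarith [hNT, mul_nonneg hDnn hCpos.le]
    have htelN := tel N
    have hζb1 : ‖ζ (zc (N * h))‖ ≤ B0 := hB0 _ (hzcZ _ h0N)
    have hζb2 : ‖ζ (zc 0)‖ ≤ B0 := hB0 _ (hzcZ _ le_rfl)
    rw [Real.norm_eq_abs] at hζb1 hζb2
    have hrem' : -(D * C * h) ≤ ∫ t in T..(N * h), φ t := by
      have h7 : |∫ t in T..(N * h), φ t| ≤ D * C * h := by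
        rw [← Real.norm_eq_abs]; exact hrem
      linarith [(abs_le.mp h7).1]
    have hNh : 2 * ε * C * h * N ≤ 2 * ε * C * (T + h) := by
      have h6 : 2 * ε * C * ((N:ℝ) * h) ≤ 2 * ε * C * (T + h) :=
        mul_le_mul_of_nonneg_left hNT (by positivity)
      nlinarith [h6]
    have habs1 := abs_le.mp hζb1
    have habs2 := abs_le.mp hζb2
    rw [hsplitT]
    nlinarith [hrem', htelN, habs1.1, habs1.2, habs2.1, habs2.2, hNh]

  -- bound on Gf for coboundedness
  obtain ⟨CG0, hCG0⟩ := hFcomp.exists_bound_of_continuousOn hGt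
  set CG : ℝ := max CG0 0 with hCG_def
  have hCGnn : (0:ℝ) ≤ CG := le_max_right _ _
  have hGae : ∀ᵐ t ∂volume.restrict (Ici (0:ℝ)), ‖Gf t‖ ≤ CG :=
    hFmem.mono fun t ht => ((hCG0 _ ht).trans (le_max_left _ _))
  have hGint_bd : ∀ T : ℝ, 0 ≤ T → ‖∫ t in (0:ℝ)..T, Gf t‖ ≤ CG * T := by
    intro T hT
    have hbd : ∀ᵐ t ∂volume.restrict (Set.uIoc 0 T), ‖Gf t‖ ≤ CG := by
      refine hae_sub ?_ hGae
      rw [uIoc_of_le hT]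
      exact fun t ht => ht.1.le
    calc ‖∫ t in (0:ℝ)..T, Gf t‖ ≤ |∫ _t in (0:ℝ)..T, CG| :=
          intervalIntegral.norm_integral_le_abs_of_norm_le hbd intervalIntegrable_const
      _ = CG * T := by
          rw [intervalIntegral.integral_const, smul_eq_mul,
            abs_of_nonneg (mul_nonneg (by linarith) hCGnn)]
          ring
  have hcob : IsCoboundedUnder (· ≥ ·) atTop
      (fun T : ℝ => (1 / T) * ∫ t in (0:ℝ)..T, Gf t) := by
    apply Filter.IsCoboundedUnder.of_frequently_le (a := CG)
    apply Filter.Eventually.frequently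
    filter_upwards [eventually_ge_atTop (1:ℝ)] with T hT1
    have hT : (0:ℝ) < T := lt_of_lt_of_le one_pos hT1
    have h0 : |∫ t in (0:ℝ)..T, Gf t| ≤ CG * T := by
      rw [← Real.norm_eq_abs]; exact hGint_bd T hT.le
    have h1 := (abs_le.mp h0).2
    rw [div_mul_eq_mul_div, one_mul, div_le_iff₀ hT]
    nlinarith
  -- conclude
  have key : ∀ ε0 : ℝ, 0 < ε0 →
      Gstar - ε0 ≤ liminf (fun T : ℝ => (1 / T) * ∫ t in (0:ℝ)..T, Gf t) atTop := by
    intro ε0 hε0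
    obtain ⟨K', hK'⟩ := main (ε0 / (4 * C)) (by positivity)
    have hcoef : 2 * (ε0 / (4 * C)) * C = ε0 / 2 := by field_simp; ring
    refine le_liminf_of_le hcob ?_
    filter_upwards [eventually_ge_atTop (max 1 (2 * K' / ε0 + 1))] with T hT
    have hT1 : (1:ℝ) ≤ T := le_trans (le_max_left _ _) hT
    have hTpos : (0:ℝ) < T := lt_of_lt_of_le one_pos hT1
    have hT2 : 2 * K' / ε0 + 1 ≤ T := le_trans (le_max_right _ _) hT
    have h3 : 2 * K' ≤ (T - 1) * ε0 := by
      have h4 : 2 * K' / ε0 ≤ T - 1 := by linarith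
      rwa [div_le_iff₀ hε0] at h4
    have hφT := hK' T hTpos.le
    rw [hcoef] at hφT
    have hGs := hGstar T hTpos.le
    rw [div_mul_eq_mul_div, one_mul, le_div_iff₀ hTpos]
    nlinarith
  by_contra hlt
  push_neg at hlt
  have hε0 : (0:ℝ) < (Gstar - liminf (fun T : ℝ => (1 / T) * ∫ t in (0:ℝ)..T, Gf t) atTop) / 2 :=
    by linarith
  have := key _ hε0
  linarith
end

section
/- Let Z ⊂ ℝⁿ be compact, Z⁰ ⊂ Z a set whose closure has nonempty interior, and suppose any two points z', z'' ∈ Z⁰ can be connected by an admissible trajectory of the averaged system (an absolutely continuous z : [0, T] → Z with z(0) = z', z(T) = z'' and z'(t) = g̃(μ(t), z(t)), (μ(t), z(t)) ∈ F a.e.). Let ψ₁, …, ψ_N ∈ C¹(ℝⁿ) have gradients that are linearly independent on every nonempty open subset of ℝⁿ. If v ∈ ℝᴺ satisfies 0 ≤ Σ_{i=1}^N v_i ∇ψ_i(z)ᵀ g̃(μ, z) for all (μ, z) ∈ F, then v = 0. -/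
open MeasureTheory Filter Set Finset
open scoped RealInnerProductSpace

theorem key {n : ℕ} (Ψ : EuclideanSpace ℝ (Fin n) → ℝ) (hΨ : ContDiff ℝ 1 Ψ)
    {T : ℝ} (hT : 0 < T) (g z : ℝ → EuclideanSpace ℝ (Fin n))
    (hint : IntervalIntegrable g volume 0 T)
    (hz : ∀ t ∈ Icc (0:ℝ) T, z t = z 0 + ∫ s in (0:ℝ)..t, g s)
    (hpos : ∀ᵐ t ∂(volume.restrict (Icc (0:ℝ) T)), 0 ≤ fderiv ℝ Ψ (z t) (g t)) :
    Ψ (z 0) ≤ Ψ (z T) := by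
  have huIcc : uIcc (0:ℝ) T = Icc 0 T := uIcc_of_le hT.le
  -- continuity of z on Icc 0 T
  have hzc : ContinuousOn z (Icc (0:ℝ) T) := by
    have h1 : ContinuousOn (fun t => z 0 + ∫ s in (0:ℝ)..t, g s) (Icc (0:ℝ) T) := by
      apply continuousOn_const.add
      have := intervalIntegral.continuousOn_primitive_interval' hint (left_mem_uIcc)
      rwa [huIcc] at this
    exact h1.congr hz
  set K : Set (EuclideanSpace ℝ (Fin n)) := z '' Icc 0 T with hKdef
  have hK : IsCompact K := isCompact_Icc.image_of_continuousOn hzc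
  set K1 := Metric.cthickening 1 K with hK1def
  have hK1 : IsCompact K1 := hK.cthickening
  have hKK1 : K ⊆ K1 := Metric.self_subset_cthickening K
  have hfd : Continuous (fderiv ℝ Ψ) := hΨ.continuous_fderiv one_ne_zero
  set B : ℝ → (EuclideanSpace ℝ (Fin n) →L[ℝ] ℝ) := fun t => fderiv ℝ Ψ (z t) with hBdef
  have hBc : ContinuousOn B (Icc (0:ℝ) T) := hfd.comp_continuousOn hzc
  set q : ℝ → ℝ := fun s => B s (g s) with hqdef
  -- integrability of q on [0, T]
  have hq : IntervalIntegrable q volume 0 T := by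
    obtain ⟨C, hC⟩ := isCompact_Icc.exists_bound_of_continuousOn hBc
    rw [intervalIntegrable_iff_integrableOn_Ioc_of_le hT.le]
    have hgm : AEStronglyMeasurable g (volume.restrict (Ioc (0:ℝ) T)) := hint.1.aestronglyMeasurable
    have hBm : AEStronglyMeasurable B (volume.restrict (Ioc (0:ℝ) T)) :=
      (hBc.mono Ioc_subset_Icc_self).aestronglyMeasurable measurableSet_Ioc
    have hqm : AEStronglyMeasurable q (volume.restrict (Ioc (0:ℝ) T)) :=
      isBoundedBilinearMap_apply.continuous.comp_aestronglyMeasurable (hBm.prodMk hgm)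
    refine Integrable.mono' (hint.1.norm.const_mul C) hqm ?_
    filter_upwards [ae_restrict_mem measurableSet_Ioc] with s hs
    calc ‖q s‖ ≤ ‖B s‖ * ‖g s‖ := (B s).le_opNorm (g s)
      _ ≤ C * ‖g s‖ := by
          exact mul_le_mul_of_nonneg_right (hC _ (Ioc_subset_Icc_self hs)) (norm_nonneg _)
  have hng : IntervalIntegrable (fun s => ‖g s‖) volume 0 T := hint.norm
  -- nonnegativity of the integral of q
  have hqpos : 0 ≤ ∫ s in (0:ℝ)..T, q s :=
    intervalIntegral.integral_nonneg_of_ae_restrict hT.le hpos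
  set G : ℝ := ∫ s in (0:ℝ)..T, ‖g s‖ with hGdef
  have hG0 : 0 ≤ G := intervalIntegral.integral_nonneg hT.le (fun u _ => norm_nonneg _)
  -- main quantitative claim
  have claim : ∀ δ > (0:ℝ), Ψ (z T) - Ψ (z 0) ≥ (∫ s in (0:ℝ)..T, q s) - 2*δ*G := by
    intro δ hδ
    -- uniform continuity of fderiv Ψ on K1
    obtain ⟨δ₁, hδ₁, hucF⟩ := Metric.uniformContinuousOn_iff.mp
      (hK1.uniformContinuousOn_of_continuous hfd.continuousOn) δ hδ
    obtain ⟨δ₂, hδ₂, hucz⟩ := Metric.uniformContinuousOn_iff.mp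
      (isCompact_Icc.uniformContinuousOn_of_continuous hzc) (min δ₁ 1) (lt_min hδ₁ one_pos)
    obtain ⟨δ₃, hδ₃, hucB⟩ := Metric.uniformContinuousOn_iff.mp
      (isCompact_Icc.uniformContinuousOn_of_continuous hBc) δ hδ
    obtain ⟨m, hm⟩ := exists_nat_gt (T / min δ₂ δ₃)
    have hmin : 0 < min δ₂ δ₃ := lt_min hδ₂ hδ₃
    have hm0 : 0 < (m:ℝ) := lt_of_le_of_lt (div_nonneg hT.le hmin.le) hm
    have hm0' : (m:ℝ) ≠ 0 := ne_of_gt hm0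
    have hstep : T / m < min δ₂ δ₃ := by
      rw [div_lt_iff₀ hm0]
      calc T = (T / min δ₂ δ₃) * min δ₂ δ₃ := by field_simp
        _ < m * min δ₂ δ₃ := mul_lt_mul_of_pos_right hm hmin
        _ = min δ₂ δ₃ * m := mul_comm _ _
    have hstep0 : 0 < T / m := div_pos hT hm0
    set τ : ℕ → ℝ := fun k => k * (T / m) with hτdef
    have hτ0 : τ 0 = 0 := by simp [hτdef]
    have hτm : τ m = T := by show (m:ℝ) * (T / m) = T; field_simp
    have hτmono : ∀ k, τ k ≤ τ (k+1) := by
      intro k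
      have : (k:ℝ) ≤ (k:ℝ) + 1 := by linarith
      simpa [hτdef, add_mul] using mul_le_mul_of_nonneg_right (by push_cast; linarith : (k:ℝ) ≤ ((k+1:ℕ):ℝ)) hstep0.le
    have hτmem : ∀ k ≤ m, τ k ∈ Icc (0:ℝ) T := by
      intro k hk
      constructor
      · positivity
      · rw [← hτm]
        exact mul_le_mul_of_nonneg_right (by exact_mod_cast hk) hstep0.le
    have hsub : ∀ k < m, uIcc (τ k) (τ (k+1)) ⊆ uIcc (0:ℝ) T := by
      intro k hk
      rw [huIcc, uIcc_of_le (hτmono k)]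
      exact Icc_subset_Icc (hτmem k hk.le).1 (hτmem (k+1) hk).2
    -- per-interval estimate
    have per : ∀ k < m, Ψ (z (τ (k+1))) - Ψ (z (τ k)) ≥
        (∫ s in τ k..τ (k+1), q s) - 2*δ*(∫ s in τ k..τ (k+1), ‖g s‖) := by
      intro k hk
      set a := τ k with hadef
      set b := τ (k+1) with hbdef
      have hamem : a ∈ Icc (0:ℝ) T := hτmem k hk.le
      have hbmem : b ∈ Icc (0:ℝ) T := hτmem (k+1) hk
      have hab : a ≤ b := hτmono k
      have hba : b - a = T / m := by
        simp only [hadef, hbdef, hτdef]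
        push_cast
        ring
      have hsubk := hsub k hk
      have hgab : IntervalIntegrable g volume a b := hint.mono_set hsubk
      have hqab : IntervalIntegrable q volume a b := hq.mono_set hsubk
      have hngab : IntervalIntegrable (fun s => ‖g s‖) volume a b := hng.mono_set hsubk
      set W := ∫ s in a..b, ‖g s‖ with hW
      have hW0 : 0 ≤ W := intervalIntegral.integral_nonneg hab (fun u _ => norm_nonneg _)
      have h0b : IntervalIntegrable g volume 0 b := hint.mono_set
        (by rw [huIcc, uIcc_of_le hbmem.1]; exact Icc_subset_Icc le_rfl hbmem.2)
      have h0a : IntervalIntegrable g volume 0 a := hint.mono_set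
        (by rw [huIcc, uIcc_of_le hamem.1]; exact Icc_subset_Icc le_rfl hamem.2)
      have hzab : z b - z a = ∫ s in a..b, g s := by
        rw [hz b hbmem, hz a hamem, add_sub_add_left_eq_sub]
        exact intervalIntegral.integral_interval_sub_left h0b h0a
      have hnzab : ‖z b - z a‖ ≤ W := by
        rw [hzab, hW]
        exact intervalIntegral.norm_integral_le_integral_norm hab
      have hdistab : dist b a < min δ₂ δ₃ := by
        rw [Real.dist_eq, abs_of_nonneg (by linarith : (0:ℝ) ≤ b - a), hba]
        exact hstep
      have hzsmall : ‖z b - z a‖ < min δ₁ 1 := by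
        rw [← dist_eq_norm]
        exact hucz b hbmem a hamem (hdistab.trans_le (min_le_left _ _))
      have hzaK : z a ∈ K := ⟨a, hamem, rfl⟩
      have hseg : segment ℝ (z a) (z b) ⊆ K1 := by
        intro x hx
        have h1 : dist (z a) x + dist x (z b) = dist (z a) (z b) :=
          dist_add_dist_of_mem_segment hx
        have h2 : dist x (z a) ≤ 1 := by
          have h3 : dist (z a) (z b) ≤ 1 := by
            rw [dist_eq_norm, norm_sub_rev]
            exact le_of_lt (hzsmall.trans_le (min_le_right _ _))
          have := dist_nonneg (x := x) (y := z b)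
          rw [dist_comm]
          linarith
        exact Metric.mem_cthickening_of_dist_le x (z a) 1 K hzaK h2
      have hmv : ‖Ψ (z b) - Ψ (z a) - B a (z b - z a)‖ ≤ δ * ‖z b - z a‖ := by
        refine Convex.norm_image_sub_le_of_norm_fderiv_le'
          (fun x _ => (hΨ.differentiable one_ne_zero).differentiableAt) ?_
          (convex_segment _ _) (left_mem_segment ℝ (z a) (z b))
          (right_mem_segment ℝ (z a) (z b))
        intro x hx
        have hx1 : x ∈ K1 := hseg hx
        have hza1 : z a ∈ K1 := hKK1 hzaK
        have hdx : dist x (z a) < δ₁ := by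
          have h1 : dist (z a) x + dist x (z b) = dist (z a) (z b) :=
            dist_add_dist_of_mem_segment hx
          have h3 : dist (z a) (z b) < δ₁ := by
            rw [dist_eq_norm, norm_sub_rev]
            exact hzsmall.trans_le (min_le_left _ _)
          have := dist_nonneg (x := x) (y := z b)
          rw [dist_comm]
          linarith
        have := hucF x hx1 (z a) hza1 hdx
        rw [dist_eq_norm] at this
        exact this.le
      have hmv2 : ‖Ψ (z b) - Ψ (z a) - B a (z b - z a)‖ ≤ δ * W :=
        hmv.trans (mul_le_mul_of_nonneg_left hnzab hδ.le)
      have hBaint : B a (z b - z a) = ∫ s in a..b, B a (g s) := by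
        rw [hzab, (B a).intervalIntegral_comp_comm hgab]
      have hBag : IntervalIntegrable (fun s => B a (g s)) volume a b := by
        rw [intervalIntegrable_iff] at hgab ⊢
        exact (B a).integrable_comp hgab
      have hptwise : ∀ s ∈ Icc a b, ‖q s - B a (g s)‖ ≤ δ * ‖g s‖ := by
        intro s hs
        have hsmem : s ∈ Icc (0:ℝ) T := ⟨le_trans hamem.1 hs.1, le_trans hs.2 hbmem.2⟩
        have hdsa : dist s a < δ₃ := by
          rw [Real.dist_eq, abs_of_nonneg (by linarith [hs.1] : (0:ℝ) ≤ s - a)]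
          have : s - a ≤ b - a := by linarith [hs.2]
          calc s - a ≤ b - a := this
            _ < min δ₂ δ₃ := by rw [hba]; exact hstep
            _ ≤ δ₃ := min_le_right _ _
        have hBs : ‖B s - B a‖ < δ := by
          rw [← dist_eq_norm]
          exact hucB s hsmem a hamem hdsa
        calc ‖q s - B a (g s)‖ = ‖(B s - B a) (g s)‖ := by
              simp [hqdef, ContinuousLinearMap.sub_apply]
          _ ≤ ‖B s - B a‖ * ‖g s‖ := (B s - B a).le_opNorm (g s)
          _ ≤ δ * ‖g s‖ := mul_le_mul_of_nonneg_right hBs.le (norm_nonneg _)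
      have hdiff : ‖(∫ s in a..b, q s) - ∫ s in a..b, B a (g s)‖ ≤ δ * W := by
        rw [← intervalIntegral.integral_sub hqab hBag]
        calc ‖∫ s in a..b, (q s - B a (g s))‖ ≤ ∫ s in a..b, ‖q s - B a (g s)‖ :=
              intervalIntegral.norm_integral_le_integral_norm hab
          _ ≤ ∫ s in a..b, δ * ‖g s‖ := by
              apply intervalIntegral.integral_mono_on hab ((hqab.sub hBag).norm) (hngab.const_mul δ)
              exact hptwise
          _ = δ * W := by rw [hW, intervalIntegral.integral_const_mul]
      have h1 : |Ψ (z b) - Ψ (z a) - B a (z b - z a)| ≤ δ * W := by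
        rwa [Real.norm_eq_abs] at hmv2
      have h2 : |(∫ s in a..b, q s) - ∫ s in a..b, B a (g s)| ≤ δ * W := by
        rwa [Real.norm_eq_abs] at hdiff
      obtain ⟨h1l, h1r⟩ := abs_le.mp h1
      obtain ⟨h2l, h2r⟩ := abs_le.mp h2
      linarith [hBaint]
    -- summation
    have tele1 : ∑ k ∈ range m, (Ψ (z (τ (k+1))) - Ψ (z (τ k))) = Ψ (z T) - Ψ (z 0) := by
      rw [Finset.sum_range_sub (fun k => Ψ (z (τ k)))]
      rw [hτ0, hτm]
    have tele2 : ∑ k ∈ range m, (∫ s in τ k..τ (k+1), q s) = ∫ s in (0:ℝ)..T, q s := by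
      rw [intervalIntegral.sum_integral_adjacent_intervals (fun k hk => hq.mono_set (hsub k hk))]
      rw [hτ0, hτm]
    have tele3 : ∑ k ∈ range m, (∫ s in τ k..τ (k+1), ‖g s‖) = G := by
      rw [intervalIntegral.sum_integral_adjacent_intervals (fun k hk => hng.mono_set (hsub k hk))]
      rw [hτ0, hτm]
    calc Ψ (z T) - Ψ (z 0) = ∑ k ∈ range m, (Ψ (z (τ (k+1))) - Ψ (z (τ k))) := tele1.symm
      _ ≥ ∑ k ∈ range m, ((∫ s in τ k..τ (k+1), q s) - 2*δ*(∫ s in τ k..τ (k+1), ‖g s‖)) :=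
          Finset.sum_le_sum (fun k hk => per k (Finset.mem_range.mp hk))
      _ = (∫ s in (0:ℝ)..T, q s) - 2*δ*G := by
          rw [Finset.sum_sub_distrib, tele2, ← Finset.mul_sum, tele3]
  -- conclude
  rw [← sub_nonneg]
  by_contra hneg
  push_neg at hneg
  have hd : 0 < (Ψ (z 0) - Ψ (z T)) := by linarith
  have hδ : 0 < (Ψ (z 0) - Ψ (z T)) / (2 * (G + 1)) := by positivity
  have hclaim := claim _ hδ
  have hδeq : (Ψ (z 0) - Ψ (z T)) / (2 * (G + 1)) * (2 * (G + 1)) = Ψ (z 0) - Ψ (z T) :=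
    div_mul_cancel₀ _ (by positivity)
  nlinarith [hqpos, hG0, hδeq, hclaim, hδ]

/-- Under the controllability assumption on the averaged system and linear independence of
the gradients of the test functions, the only nonnegative combination of the dual
constraints is trivial. -/
theorem stmt_5 {n N : ℕ} {M : Type*} [MetricSpace M]
    (Z : Set (EuclideanSpace ℝ (Fin n))) (hZ : IsCompact Z)
    (Z0 : Set (EuclideanSpace ℝ (Fin n))) (hZ0 : Z0 ⊆ Z)
    (hZ0int : (interior (closure Z0)).Nonempty)
    (F : Set (M × EuclideanSpace ℝ (Fin n)))
    (gt : M × EuclideanSpace ℝ (Fin n) → EuclideanSpace ℝ (Fin n))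
    (hconn : ∀ z' ∈ Z0, ∀ z'' ∈ Z0, ∃ T > (0:ℝ), ∃ μ : ℝ → M,
      ∃ z : ℝ → EuclideanSpace ℝ (Fin n),
        z 0 = z' ∧ z T = z'' ∧ (∀ t ∈ Icc (0:ℝ) T, z t ∈ Z) ∧
        (∀ᵐ t ∂(volume.restrict (Icc (0:ℝ) T)), (μ t, z t) ∈ F) ∧
        (∀ T' ∈ Icc (0:ℝ) T, IntervalIntegrable (fun t => gt (μ t, z t)) volume 0 T') ∧
        (∀ t ∈ Icc (0:ℝ) T, z t = z 0 + ∫ s in (0:ℝ)..t, gt (μ s, z s)))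
    (ψ : Fin N → EuclideanSpace ℝ (Fin n) → ℝ) (hψ : ∀ i, ContDiff ℝ 1 (ψ i))
    (hli : ∀ Q : Set (EuclideanSpace ℝ (Fin n)), IsOpen Q → Q.Nonempty →
      ∀ w : Fin N → ℝ, (∀ x ∈ Q, ∑ i, w i • gradient (ψ i) x = 0) → w = 0)
    (v : Fin N → ℝ)
    (hv : ∀ w ∈ F, 0 ≤ ∑ i, v i * ⟪gradient (ψ i) w.2, gt w⟫) :
    v = 0 := by
  have hZ0ne : Z0.Nonempty := by
    by_contra h
    rw [Set.not_nonempty_iff_eq_empty] at h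
    simp [h] at hZ0int
  set Ψ : EuclideanSpace ℝ (Fin n) → ℝ := fun x => ∑ i, v i • ψ i x with hΨdef
  have hΨc : ContDiff ℝ 1 Ψ := ContDiff.sum fun i _ => (hψ i).const_smul (v i)
  have hfderiv : ∀ x, fderiv ℝ Ψ x = ∑ i, v i • fderiv ℝ (ψ i) x := by
    intro x
    rw [hΨdef]
    rw [fderiv_fun_sum (A := fun i y => v i • ψ i y) (fun i _ => ((hψ i).differentiable one_ne_zero x).const_smul (v i))]
    exact Finset.sum_congr rfl fun i _ => fderiv_fun_const_smul ((hψ i).differentiable one_ne_zero x) (v i)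
  have hgrad : ∀ x, gradient Ψ x = ∑ i, v i • gradient (ψ i) x := by
    intro x
    simp only [gradient, hfderiv, map_sum, _root_.map_smul]
  have hkey : ∀ x y, fderiv ℝ Ψ x y = ∑ i, v i * ⟪gradient (ψ i) x, y⟫ := by
    intro x y
    rw [hfderiv]
    simp only [ContinuousLinearMap.coe_sum', Finset.sum_apply, ContinuousLinearMap.coe_smul',
      Pi.smul_apply, smul_eq_mul]
    exact Finset.sum_congr rfl fun i _ => by
      rw [gradient, InnerProductSpace.toDual_symm_apply]
  have mono : ∀ z' ∈ Z0, ∀ z'' ∈ Z0, Ψ z' ≤ Ψ z'' := by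
    intro z' hz' z'' hz''
    obtain ⟨T, hT, μ, z, hz0, hzT, hzZ, hF, hint, hzint⟩ := hconn z' hz' z'' hz''
    have hmain := key Ψ hΨc hT (fun t => gt (μ t, z t)) z
      (hint T (right_mem_Icc.mpr hT.le)) hzint ?_
    · rwa [hz0, hzT] at hmain
    · filter_upwards [hF] with t ht
      rw [hkey]
      exact hv (μ t, z t) ht
  obtain ⟨z₀, hz₀⟩ := hZ0ne
  have hconst : ∀ x ∈ closure Z0, Ψ x = Ψ z₀ := by
    have hsub2 : Z0 ⊆ {x | Ψ x = Ψ z₀} := fun x hx =>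
      le_antisymm (mono x hx z₀ hz₀) (mono z₀ hz₀ x hx)
    exact fun x hx =>
      closure_minimal hsub2 (isClosed_eq hΨc.continuous continuous_const) hx
  apply hli (interior (closure Z0)) isOpen_interior hZ0int v
  intro x hx
  have hev : Ψ =ᶠ[nhds x] fun _ => Ψ z₀ := by
    filter_upwards [mem_interior_iff_mem_nhds.mp hx] with y hy
    exact hconst y hy
  have hf0 : fderiv ℝ Ψ x = 0 := by
    rw [hev.fderiv_eq]
    exact fderiv_const_apply _
  have hg0 : gradient Ψ x = 0 := by simp [gradient, hf0]
  rw [← hgrad x]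
  exact hg0
end

section
/- Let (μ(·), z(·)) be an admissible pair of the averaged system such that for every continuous h̃ : F → ℝ the limit lim_{T→∞} (1/T) ∫₀^T h̃(μ(t), z(t)) dt exists, defining a measure p ∈ 𝒫(F) via ∫_F h̃ dp = lim_{T→∞} (1/T) ∫₀^T h̃(μ(t), z(t)) dt. Then ∫_F ∇ψ(z)ᵀ g̃(μ, z) dp(μ, z) = 0 for every ψ ∈ C¹(ℝⁿ). -/
set_option maxHeartbeats 1000000

open MeasureTheory Filter Set
open scoped RealInnerProductSpace ENNReal NNReal

lemma aux_integrable_of_cont {W : Type*} [MetricSpace W] [CompactSpace W]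
    [MeasurableSpace W] [BorelSpace W]
    {E : Type*} [NormedAddCommGroup E]
    (G : W → E) (hG : Continuous G) (ν : Measure W) [IsFiniteMeasure ν] :
    Integrable G ν :=
  hG.integrable_of_hasCompactSupport (HasCompactSupport.of_compactSpace G)

lemma aux_gtil_cont {n : ℕ} {U Y : Type*}
    [MetricSpace U] [CompactSpace U] [MeasurableSpace U] [BorelSpace U]
    [SecondCountableTopology U]
    [MetricSpace Y] [CompactSpace Y] [MeasurableSpace Y] [BorelSpace Y]
    [SecondCountableTopology Y]
    (g : U × Y × EuclideanSpace ℝ (Fin n) → EuclideanSpace ℝ (Fin n)) (hg : Continuous g) :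
    Continuous (fun q : ProbabilityMeasure (U × Y) × EuclideanSpace ℝ (Fin n) =>
      ∫ w : U × Y, g (w.1, w.2, q.2) ∂q.1.toMeasure) := by
  have hgc : ∀ x : EuclideanSpace ℝ (Fin n), Continuous (fun w : U × Y => g (w.1, w.2, x)) :=
    fun x => hg.comp (by fun_prop)
  rw [continuous_iff_continuousAt]
  rintro ⟨ν₀, x₀⟩
  have hsplit : (fun q : ProbabilityMeasure (U × Y) × EuclideanSpace ℝ (Fin n) =>
      ∫ w : U × Y, g (w.1, w.2, q.2) ∂q.1.toMeasure)
      = (fun q : ProbabilityMeasure (U × Y) × EuclideanSpace ℝ (Fin n) =>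
        (∫ w : U × Y, g (w.1, w.2, q.2) ∂q.1.toMeasure
          - ∫ w : U × Y, g (w.1, w.2, x₀) ∂q.1.toMeasure)
        + ∫ w : U × Y, g (w.1, w.2, x₀) ∂q.1.toMeasure) := by
    funext q; rw [sub_add_cancel]
  rw [ContinuousAt, hsplit]
  have h1 : Tendsto (fun q : ProbabilityMeasure (U × Y) × EuclideanSpace ℝ (Fin n) =>
      ∫ w : U × Y, g (w.1, w.2, q.2) ∂q.1.toMeasure
        - ∫ w : U × Y, g (w.1, w.2, x₀) ∂q.1.toMeasure) (nhds (ν₀, x₀)) (nhds 0) := by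
    rw [NormedAddCommGroup.tendsto_nhds_zero]
    intro ε hε
    -- uniform continuity of g on (U × Y) × closedBall x₀ 1
    have hK : IsCompact ((univ : Set (U × Y)) ×ˢ Metric.closedBall x₀ 1) :=
      isCompact_univ.prod (isCompact_closedBall _ _)
    have huc := hK.uniformContinuousOn_of_continuous
      ((hg.comp (by fun_prop :
        Continuous (fun q : (U × Y) × EuclideanSpace ℝ (Fin n) =>
          (q.1.1, q.1.2, q.2)))).continuousOn)
    rw [Metric.uniformContinuousOn_iff] at huc
    obtain ⟨δ, hδpos, hδ⟩ := huc (ε / 2) (by positivity)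
    have hev : ∀ᶠ q : ProbabilityMeasure (U × Y) × EuclideanSpace ℝ (Fin n)
        in nhds (ν₀, x₀), q.2 ∈ Metric.ball x₀ (min δ 1) := by
      have : Metric.ball x₀ (min δ 1) ∈ nhds x₀ :=
        Metric.ball_mem_nhds _ (lt_min hδpos one_pos)
      exact (continuous_snd.tendsto (ν₀, x₀)).eventually this
    filter_upwards [hev] with q hq
    have hq1 : dist q.2 x₀ < δ := lt_of_lt_of_le hq (min_le_left _ _)
    have hq2 : q.2 ∈ Metric.closedBall x₀ 1 :=
      Metric.mem_closedBall.mpr (le_of_lt (lt_of_lt_of_le hq (min_le_right _ _)))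
    have hint1 : Integrable (fun w : U × Y => g (w.1, w.2, q.2)) q.1.toMeasure :=
      aux_integrable_of_cont _ (hgc q.2) _
    have hint2 : Integrable (fun w : U × Y => g (w.1, w.2, x₀)) q.1.toMeasure :=
      aux_integrable_of_cont _ (hgc x₀) _
    rw [← integral_sub hint1 hint2]
    calc ‖∫ w : U × Y, (g (w.1, w.2, q.2) - g (w.1, w.2, x₀)) ∂q.1.toMeasure‖
        ≤ ∫ w : U × Y, ‖g (w.1, w.2, q.2) - g (w.1, w.2, x₀)‖ ∂q.1.toMeasure :=
          norm_integral_le_integral_norm _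
      _ ≤ ∫ _w : U × Y, (ε / 2) ∂q.1.toMeasure := by
          apply integral_mono (hint1.sub hint2).norm (integrable_const _)
          intro w
          have hmem1 : (w, q.2) ∈ (univ : Set (U × Y)) ×ˢ Metric.closedBall x₀ 1 :=
            ⟨mem_univ _, hq2⟩
          have hmem2 : (w, x₀) ∈ (univ : Set (U × Y)) ×ˢ Metric.closedBall x₀ 1 :=
            ⟨mem_univ _, Metric.mem_closedBall_self (by norm_num)⟩
          have hd : dist ((w, q.2) : (U × Y) × EuclideanSpace ℝ (Fin n)) (w, x₀) < δ := by
            rw [Prod.dist_eq]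
            simp only [dist_self]
            exact max_lt hδpos hq1
          have := hδ _ hmem1 _ hmem2 hd
          rw [dist_eq_norm] at this
          exact le_of_lt this
      _ ≤ ε / 2 := by
          rw [integral_const]
          simp
      _ < ε := by linarith
  have h2 : Tendsto (fun q : ProbabilityMeasure (U × Y) × EuclideanSpace ℝ (Fin n) =>
      ∫ w : U × Y, g (w.1, w.2, x₀) ∂q.1.toMeasure) (nhds (ν₀, x₀))
      (nhds (∫ w : U × Y, g (w.1, w.2, x₀) ∂ν₀.toMeasure)) := by
    have hcont : Continuous (fun ν : ProbabilityMeasure (U × Y) =>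
        ∫ w : U × Y, g (w.1, w.2, x₀) ∂ν.toMeasure) := by
      -- coordinatewise
      have hcoord : ∀ i : Fin n, Continuous (fun ν : ProbabilityMeasure (U × Y) =>
          ∫ w : U × Y, g (w.1, w.2, x₀) i ∂ν.toMeasure) := by
        intro i
        exact ProbabilityMeasure.continuous_integral_boundedContinuousFunction
          (BoundedContinuousFunction.mkOfCompact
            ⟨fun w : U × Y => g (w.1, w.2, x₀) i,
              (continuous_apply i).comp ((PiLp.continuous_ofLp 2 _).comp (hgc x₀))⟩)
      have heq : ∀ (ν : ProbabilityMeasure (U × Y)) (i : Fin n),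
          (∫ w : U × Y, g (w.1, w.2, x₀) ∂ν.toMeasure) i
            = ∫ w : U × Y, g (w.1, w.2, x₀) i ∂ν.toMeasure := by
        intro ν i
        exact ((EuclideanSpace.proj i : EuclideanSpace ℝ (Fin n) →L[ℝ] ℝ).integral_comp_comm
          (aux_integrable_of_cont _ (hgc x₀) _)).symm
      have : Continuous (fun ν : ProbabilityMeasure (U × Y) =>
          (WithLp.equiv 2 (Fin n → ℝ)) (∫ w : U × Y, g (w.1, w.2, x₀) ∂ν.toMeasure)) := by
        apply continuous_pi
        intro i
        have : (fun ν : ProbabilityMeasure (U × Y) =>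
            (WithLp.equiv 2 (Fin n → ℝ)) (∫ w : U × Y, g (w.1, w.2, x₀) ∂ν.toMeasure) i)
            = fun ν : ProbabilityMeasure (U × Y) =>
              ∫ w : U × Y, g (w.1, w.2, x₀) i ∂ν.toMeasure := by
          funext ν; exact heq ν i
        rw [this]
        exact hcoord i
      have := (PiLp.continuous_toLp 2 (fun _ : Fin n => ℝ)).comp this
      exact this
    exact (hcont.comp continuous_fst).tendsto (ν₀, x₀)
  simpa using h1.add h2


lemma aux_key_ftc {n : ℕ} (ψ : EuclideanSpace ℝ (Fin n) → ℝ) (hψ : ContDiff ℝ 1 ψ)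
    (Z : Set (EuclideanSpace ℝ (Fin n))) (hZ : IsCompact Z)
    (z f : ℝ → EuclideanSpace ℝ (Fin n))
    (hmemZ : ∀ t ≥ (0:ℝ), z t ∈ Z)
    (hint : ∀ T : ℝ, IntervalIntegrable f volume 0 T)
    (hode : ∀ T ≥ (0:ℝ), z T = z 0 + ∫ t in (0:ℝ)..T, f t)
    (T : ℝ) (hT : 0 ≤ T) :
    ∫ t in (0:ℝ)..T, ⟪gradient ψ (z t), f t⟫ = ψ (z T) - ψ (z 0) := by
  have hψd : Differentiable ℝ ψ := hψ.differentiable one_ne_zero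
  have hgc : Continuous (gradient ψ) := by
    have : gradient ψ = fun x => (InnerProductSpace.toDual ℝ
        (EuclideanSpace ℝ (Fin n))).symm (fderiv ℝ ψ x) := rfl
    rw [this]
    exact (InnerProductSpace.toDual ℝ _).symm.continuous.comp (hψ.continuous_fderiv one_ne_zero)
  have hinner : ∀ (x v : EuclideanSpace ℝ (Fin n)), fderiv ℝ ψ x v = ⟪gradient ψ x, v⟫ := by
    intro x v
    exact (InnerProductSpace.toDual_symm_apply).symm
  have hnormeq : ∀ x : EuclideanSpace ℝ (Fin n), ‖gradient ψ x‖ = ‖fderiv ℝ ψ x‖ := by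
    intro x
    exact LinearIsometryEquiv.norm_map _ _
  -- compact thickening and bounds
  set K' : Set (EuclideanSpace ℝ (Fin n)) := Metric.cthickening 1 Z with hK'def
  have hK' : IsCompact K' := hZ.cthickening
  have hZK : Z ⊆ K' := Metric.self_subset_cthickening Z
  obtain ⟨M₀, hM₀⟩ := hK'.exists_bound_of_continuousOn hgc.continuousOn
  set M : ℝ := max M₀ 0 with hMdef
  have hM0 : 0 ≤ M := le_max_right _ _
  have hM : ∀ x ∈ K', ‖gradient ψ x‖ ≤ M := fun x hx => (hM₀ x hx).trans (le_max_left _ _)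
  -- the continuous version of z
  set zp : ℝ → EuclideanSpace ℝ (Fin n) := fun s => z 0 + ∫ t in (0:ℝ)..s, f t with hzpdef
  have hzp_cont : Continuous zp :=
    continuous_const.add (intervalIntegral.continuous_primitive
      (fun a b => (hint a).symm.trans (hint b)) 0)
  have hz_eq : ∀ s ≥ (0:ℝ), z s = zp s := hode
  have hzpZ : ∀ s ∈ Icc (0:ℝ) T, zp s ∈ Z := fun s hs => by
    rw [← hz_eq s hs.1]; exact hmemZ s hs.1
  -- rewrite the LHS with zp
  have hLHS : ∫ t in (0:ℝ)..T, ⟪gradient ψ (z t), f t⟫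
      = ∫ t in (0:ℝ)..T, ⟪gradient ψ (zp t), f t⟫ := by
    apply intervalIntegral.integral_congr
    intro t ht
    rw [uIcc_of_le hT] at ht
    show ⟪gradient ψ (z t), f t⟫ = ⟪gradient ψ (zp t), f t⟫
    rw [hz_eq t ht.1]
  rw [hLHS, hz_eq T hT, hz_eq 0 le_rfl]
  -- integrability of f on Ioc 0 T and of the main integrand
  have hfI : IntegrableOn f (Ioc 0 T) volume := (hint T).1
  have hI0 : (0:ℝ) ≤ ∫ t in (0:ℝ)..T, ‖f t‖ :=
    intervalIntegral.integral_nonneg hT (fun u _ => norm_nonneg _)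
  set I : ℝ := ∫ t in (0:ℝ)..T, ‖f t‖ with hIdef
  have hφint : IntervalIntegrable (fun t => ⟪gradient ψ (zp t), f t⟫) volume 0 T := by
    obtain ⟨C₂, hC₂⟩ := (isCompact_Icc (a := (0:ℝ)) (b := T)).exists_bound_of_continuousOn
      ((hgc.comp hzp_cont).continuousOn)
    rw [intervalIntegrable_iff_integrableOn_Ioc_of_le hT]
    apply Integrable.mono' ((hfI.norm).const_mul C₂)
    · exact (Continuous.aestronglyMeasurable (by fun_prop)|>.restrict).inner
        hfI.aestronglyMeasurable
    · filter_upwards [ae_restrict_mem measurableSet_Ioc] with t ht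
      calc ‖⟪gradient ψ (zp t), f t⟫‖ ≤ ‖gradient ψ (zp t)‖ * ‖f t‖ := norm_inner_le_norm _ _
        _ ≤ C₂ * ‖f t‖ := by
            apply mul_le_mul_of_nonneg_right _ (norm_nonneg _)
            exact hC₂ t (Ioc_subset_Icc_self ht)
  -- main ε-argument
  have main : ∀ η : ℝ, 0 < η →
      |(∫ t in (0:ℝ)..T, ⟪gradient ψ (zp t), f t⟫) - (ψ (zp T) - ψ (zp 0))| ≤ η := by
    intro η hη
    have hI1 : (0:ℝ) < I + 1 := by linarith
    set η₁ : ℝ := η / (2 * (I + 1)) with hη₁def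
    have hη₁ : 0 < η₁ := by positivity
    have huc := hK'.uniformContinuousOn_of_continuous hgc.continuousOn
    rw [Metric.uniformContinuousOn_iff] at huc
    obtain ⟨δ, hδpos, hδ⟩ := huc η₁ hη₁
    have hM1 : (0:ℝ) < M + 1 := by linarith
    set ε' : ℝ := min 1 (min (δ / 2) (η / (4 * (M + 1)))) with hε'def
    have hε'pos : 0 < ε' := lt_min one_pos (lt_min (by positivity) (by positivity))
    have hε'1 : ε' ≤ 1 := min_le_left _ _
    have hε'δ : ε' < δ := lt_of_le_of_lt ((min_le_right _ _).trans (min_le_left _ _))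
      (by linarith)
    have hε'η : ε' ≤ η / (4 * (M + 1)) := (min_le_right _ _).trans (min_le_right _ _)
    -- approximate f in L¹ by a continuous function
    set f' : ℝ → EuclideanSpace ℝ (Fin n) := (Ioc (0:ℝ) T).indicator f with hf'def
    have hf'int : Integrable f' volume := hfI.integrable_indicator measurableSet_Ioc
    obtain ⟨fc, -, hfcdist, hfc_cont, hfc_int⟩ :=
      hf'int.exists_hasCompactSupport_integral_sub_le hε'pos
    -- error bound on interval integrals of the difference
    have hdiff : ∀ s, 0 ≤ s → s ≤ T → (∫ t in (0:ℝ)..s, ‖f t - fc t‖) ≤ ε' := by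
      intro s hs0 hsT
      rw [intervalIntegral.integral_of_le hs0]
      have heq : ∫ t in Ioc (0:ℝ) s, ‖f t - fc t‖ = ∫ t in Ioc (0:ℝ) s, ‖f' t - fc t‖ := by
        apply setIntegral_congr_fun measurableSet_Ioc
        intro t ht
        have : f t = f' t := (indicator_of_mem (Ioc_subset_Ioc_right hsT ht) f).symm
        show ‖f t - fc t‖ = ‖f' t - fc t‖
        rw [this]
      rw [heq]
      refine le_trans ?_ hfcdist
      exact setIntegral_le_integral (hf'int.sub hfc_int).norm
        (Eventually.of_forall (fun t => norm_nonneg _))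
    -- the approximate trajectory
    set zc : ℝ → EuclideanSpace ℝ (Fin n) := fun s => z 0 + ∫ t in (0:ℝ)..s, fc t with hzcdef
    have hzc_deriv : ∀ s : ℝ, HasDerivAt zc (fc s) s := by
      intro s
      apply HasDerivAt.const_add
      exact intervalIntegral.integral_hasDerivAt_right (hfc_cont.intervalIntegrable _ _)
        hfc_cont.aestronglyMeasurable.stronglyMeasurableAtFilter hfc_cont.continuousAt
    have hzc_cont : Continuous zc := by
      rw [continuous_iff_continuousAt]
      exact fun s => (hzc_deriv s).continuousAt
    have hzc_dist : ∀ s ∈ Icc (0:ℝ) T, ‖zc s - zp s‖ ≤ ε' := by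
      intro s hs
      have : zc s - zp s = ∫ t in (0:ℝ)..s, (fc t - f t) := by
        rw [intervalIntegral.integral_sub (hfc_cont.intervalIntegrable _ _)
          ((hint s))]
        simp [hzcdef, hzpdef]
      rw [this]
      calc ‖∫ t in (0:ℝ)..s, (fc t - f t)‖ ≤ ∫ t in (0:ℝ)..s, ‖fc t - f t‖ :=
            intervalIntegral.norm_integral_le_integral_norm hs.1
        _ = ∫ t in (0:ℝ)..s, ‖f t - fc t‖ := by simp_rw [norm_sub_rev]
        _ ≤ ε' := hdiff s hs.1 hs.2
    have hzcK : ∀ s ∈ Icc (0:ℝ) T, zc s ∈ K' := by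
      intro s hs
      apply Metric.mem_cthickening_of_dist_le (zc s) (zp s) 1 Z (hzpZ s hs)
      rw [dist_eq_norm]
      exact (hzc_dist s hs).trans hε'1
    -- FTC for the approximate trajectory
    have hcomp : ∀ s ∈ uIcc (0:ℝ) T, HasDerivAt (fun u => ψ (zc u)) ⟪gradient ψ (zc s), fc s⟫ s := by
      intro s _
      have h1 := ((hψd (zc s)).hasFDerivAt).comp_hasDerivAt s (hzc_deriv s)
      rwa [hinner] at h1
    have hFTC : ∫ s in (0:ℝ)..T, ⟪gradient ψ (zc s), fc s⟫ = ψ (zc T) - ψ (zc 0) :=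
      intervalIntegral.integral_eq_sub_of_hasDerivAt hcomp
        (((hgc.comp hzc_cont).inner hfc_cont).intervalIntegrable _ _)
    have hzc0 : zc 0 = zp 0 := by simp [hzcdef, hzpdef]
    -- difference of the two integrals
    have hDint1 : IntervalIntegrable (fun s => ⟪gradient ψ (zc s), fc s⟫) volume 0 T :=
      ((hgc.comp hzc_cont).inner hfc_cont).intervalIntegrable _ _
    have hbound : ∀ t ∈ Icc (0:ℝ) T,
        ‖⟪gradient ψ (zp t), f t⟫ - ⟪gradient ψ (zc t), fc t⟫‖
          ≤ η₁ * ‖fc t‖ + M * ‖f t - fc t‖ := by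
      intro t ht
      have hzpK : zp t ∈ K' := hZK (hzpZ t ht)
      have hzcK' : zc t ∈ K' := hzcK t ht
      have hdist : dist (zp t) (zc t) < δ := by
        rw [dist_eq_norm, norm_sub_rev]
        exact lt_of_le_of_lt (hzc_dist t ht) hε'δ
      have hgraddist : ‖gradient ψ (zp t) - gradient ψ (zc t)‖ < η₁ := by
        have := hδ _ hzpK _ hzcK' hdist
        rwa [dist_eq_norm] at this
      have hdecomp : ⟪gradient ψ (zp t), f t⟫ - ⟪gradient ψ (zc t), fc t⟫
          = ⟪gradient ψ (zp t) - gradient ψ (zc t), fc t⟫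
            + ⟪gradient ψ (zp t), f t - fc t⟫ := by
        simp only [inner_sub_left, inner_sub_right]
        ring
      rw [hdecomp]
      calc ‖⟪gradient ψ (zp t) - gradient ψ (zc t), fc t⟫
            + ⟪gradient ψ (zp t), f t - fc t⟫‖
          ≤ ‖⟪gradient ψ (zp t) - gradient ψ (zc t), fc t⟫‖
            + ‖⟪gradient ψ (zp t), f t - fc t⟫‖ := norm_add_le _ _
        _ ≤ ‖gradient ψ (zp t) - gradient ψ (zc t)‖ * ‖fc t‖
            + ‖gradient ψ (zp t)‖ * ‖f t - fc t‖ :=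
            add_le_add (norm_inner_le_norm _ _) (norm_inner_le_norm _ _)
        _ ≤ η₁ * ‖fc t‖ + M * ‖f t - fc t‖ :=
            add_le_add
              (mul_le_mul_of_nonneg_right (le_of_lt hgraddist) (norm_nonneg _))
              (mul_le_mul_of_nonneg_right (hM _ hzpK) (norm_nonneg _))
    have hintbound : IntervalIntegrable (fun t => η₁ * ‖fc t‖ + M * ‖f t - fc t‖) volume 0 T := by
      apply IntervalIntegrable.add
      · exact (continuous_const.mul hfc_cont.norm : Continuous fun t => η₁ * ‖fc t‖).intervalIntegrable _ _
      · rw [intervalIntegrable_iff_integrableOn_Ioc_of_le hT]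
        exact ((hfI.sub hfc_int.integrableOn).norm).const_mul M
    have hD : |(∫ t in (0:ℝ)..T, ⟪gradient ψ (zp t), f t⟫)
        - (∫ s in (0:ℝ)..T, ⟪gradient ψ (zc s), fc s⟫)| ≤ η₁ * (I + ε') + M * ε' := by
      rw [← intervalIntegral.integral_sub hφint hDint1]
      calc |∫ t in (0:ℝ)..T, (⟪gradient ψ (zp t), f t⟫ - ⟪gradient ψ (zc t), fc t⟫)|
          ≤ ∫ t in (0:ℝ)..T, ‖⟪gradient ψ (zp t), f t⟫ - ⟪gradient ψ (zc t), fc t⟫‖ := by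
            rw [← Real.norm_eq_abs]
            exact intervalIntegral.norm_integral_le_integral_norm hT
        _ ≤ ∫ t in (0:ℝ)..T, (η₁ * ‖fc t‖ + M * ‖f t - fc t‖) := by
            apply intervalIntegral.integral_mono_on hT _ hintbound hbound
            exact (hφint.sub hDint1).norm
        _ = η₁ * (∫ t in (0:ℝ)..T, ‖fc t‖) + M * (∫ t in (0:ℝ)..T, ‖f t - fc t‖) := by
            rw [intervalIntegral.integral_add ((show Continuous fun t => η₁ * ‖fc t‖ from continuous_const.mul hfc_cont.norm).intervalIntegrable _ _)
              (by rw [intervalIntegrable_iff_integrableOn_Ioc_of_le hT]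
                  exact ((hfI.sub hfc_int.integrableOn).norm).const_mul M),
              intervalIntegral.integral_const_mul, intervalIntegral.integral_const_mul]
        _ ≤ η₁ * (I + ε') + M * ε' := by
            apply add_le_add
            · apply mul_le_mul_of_nonneg_left _ (le_of_lt hη₁)
              calc (∫ t in (0:ℝ)..T, ‖fc t‖)
                  ≤ ∫ t in (0:ℝ)..T, (‖f t‖ + ‖f t - fc t‖) := by
                    apply intervalIntegral.integral_mono_on hT
                      ((hfc_cont.norm).intervalIntegrable _ _)
                    · apply IntervalIntegrable.add ((hint T).norm)
                      rw [intervalIntegrable_iff_integrableOn_Ioc_of_le hT]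
                      exact ((hfI.sub hfc_int.integrableOn).norm)
                    · intro t _
                      calc ‖fc t‖ = ‖f t - (f t - fc t)‖ := by rw [sub_sub_cancel]
                        _ ≤ ‖f t‖ + ‖f t - fc t‖ := norm_sub_le _ _
                  _ = I + ∫ t in (0:ℝ)..T, ‖f t - fc t‖ := by
                      rw [intervalIntegral.integral_add ((hint T).norm)
                        (by rw [intervalIntegrable_iff_integrableOn_Ioc_of_le hT]
                            exact ((hfI.sub hfc_int.integrableOn).norm))]
                  _ ≤ I + ε' := by linarith [hdiff T hT le_rfl]
            · exact mul_le_mul_of_nonneg_left (hdiff T hT le_rfl) hM0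
    -- endpoint estimate
    have hend : |ψ (zc T) - ψ (zp T)| ≤ M * ε' := by
      have hTin : T ∈ Icc (0:ℝ) T := ⟨hT, le_rfl⟩
      have hball : Metric.closedBall (zp T) 1 ⊆ K' := by
        intro x hx
        exact Metric.mem_cthickening_of_dist_le x (zp T) 1 Z (hzpZ T hTin)
          (Metric.mem_closedBall.mp hx)
      have hmvt := Convex.norm_image_sub_le_of_norm_fderiv_le
        (f := ψ) (s := Metric.closedBall (zp T) 1)
        (fun x _ => hψd x) (fun x hx => by rw [← hnormeq]; exact hM x (hball hx))
        (convex_closedBall _ _) (Metric.mem_closedBall_self (by norm_num))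
        (show zc T ∈ Metric.closedBall (zp T) 1 by
          rw [Metric.mem_closedBall, dist_eq_norm]
          exact (hzc_dist T hTin).trans hε'1)
      rw [← Real.norm_eq_abs]
      calc ‖ψ (zc T) - ψ (zp T)‖ ≤ M * ‖zc T - zp T‖ := hmvt
        _ ≤ M * ε' := mul_le_mul_of_nonneg_left (hzc_dist T hTin) hM0
    -- put everything together
    have hεM : M * ε' ≤ η / 4 := by
      calc M * ε' ≤ (M + 1) * ε' := by nlinarith
        _ ≤ (M + 1) * (η / (4 * (M + 1))) :=
            mul_le_mul_of_nonneg_left hε'η (by linarith)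
        _ = η / 4 := by field_simp
    have hη₁I : η₁ * (I + ε') ≤ η / 2 := by
      calc η₁ * (I + ε') ≤ η₁ * (I + 1) := by nlinarith
        _ = η / 2 := by rw [hη₁def]; field_simp
    calc |(∫ t in (0:ℝ)..T, ⟪gradient ψ (zp t), f t⟫) - (ψ (zp T) - ψ (zp 0))|
        = |((∫ t in (0:ℝ)..T, ⟪gradient ψ (zp t), f t⟫)
            - (∫ s in (0:ℝ)..T, ⟪gradient ψ (zc s), fc s⟫))
          + (ψ (zc T) - ψ (zp T))| := by
          rw [hFTC, hzc0]
          ring_nf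
      _ ≤ |(∫ t in (0:ℝ)..T, ⟪gradient ψ (zp t), f t⟫)
            - (∫ s in (0:ℝ)..T, ⟪gradient ψ (zc s), fc s⟫)|
          + |ψ (zc T) - ψ (zp T)| := abs_add_le _ _
      _ ≤ (η₁ * (I + ε') + M * ε') + M * ε' := add_le_add hD hend
      _ ≤ η := by linarith
  have h0 : |(∫ t in (0:ℝ)..T, ⟪gradient ψ (zp t), f t⟫) - (ψ (zp T) - ψ (zp 0))| ≤ 0 := by
    apply le_of_forall_pos_le_add
    intro ε hε
    simpa using main ε hε
  have := abs_nonpos_iff.mp h0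
  linarith [abs_nonneg ((∫ t in (0:ℝ)..T, ⟪gradient ψ (zp t), f t⟫) - (ψ (zp T) - ψ (zp 0))),
    sub_eq_zero.mp this]


/-- The occupational measure generated by an admissible pair of the averaged system
satisfies the linear constraints of the averaged IDLP problem. -/
theorem stmt_9 {n : ℕ} {U Y : Type*}
    [MetricSpace U] [CompactSpace U] [MeasurableSpace U] [BorelSpace U]
    [SecondCountableTopology U]
    [MetricSpace Y] [CompactSpace Y] [MeasurableSpace Y] [BorelSpace Y]
    [SecondCountableTopology Y]
    [MeasurableSpace (ProbabilityMeasure (U × Y))]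
    [BorelSpace (ProbabilityMeasure (U × Y))]
    (Z : Set (EuclideanSpace ℝ (Fin n))) (hZ : IsCompact Z)
    (F : Set (ProbabilityMeasure (U × Y) × EuclideanSpace ℝ (Fin n))) (hF : IsCompact F)
    (g : U × Y × EuclideanSpace ℝ (Fin n) → EuclideanSpace ℝ (Fin n)) (hg : Continuous g)
    (gtil : ProbabilityMeasure (U × Y) → EuclideanSpace ℝ (Fin n) →
      EuclideanSpace ℝ (Fin n))
    (hgtil : ∀ ν zz, gtil ν zz = ∫ w : U × Y, g (w.1, w.2, zz) ∂ν.toMeasure)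
    (μ : ℝ → ProbabilityMeasure (U × Y)) (z : ℝ → EuclideanSpace ℝ (Fin n))
    (hμmeas : Measurable μ)
    (hmemZ : ∀ t ≥ (0:ℝ), z t ∈ Z)
    (hmemF : ∀ᵐ t ∂(volume.restrict (Ici (0:ℝ))), (μ t, z t) ∈ F)
    (hint : ∀ T : ℝ, IntervalIntegrable (fun t => gtil (μ t) (z t)) volume 0 T)
    (hode : ∀ T ≥ (0:ℝ), z T = z 0 + ∫ t in (0:ℝ)..T, gtil (μ t) (z t))
    (p : Measure (ProbabilityMeasure (U × Y) × EuclideanSpace ℝ (Fin n)))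
    [IsProbabilityMeasure p]
    (hp : ∀ h : C(ProbabilityMeasure (U × Y) × EuclideanSpace ℝ (Fin n), ℝ),
      Tendsto (fun T : ℝ => (1 / T) * ∫ t in (0:ℝ)..T, h (μ t, z t)) atTop
        (nhds (∫ w, h w ∂p))) :
    ∀ ψ : EuclideanSpace ℝ (Fin n) → ℝ, ContDiff ℝ 1 ψ →
      ∫ w, ⟪gradient ψ w.2, gtil w.1 w.2⟫ ∂p = 0 := by
  intro ψ hψ
  -- continuity of gtil
  have hgtilc : Continuous (fun q : ProbabilityMeasure (U × Y) × EuclideanSpace ℝ (Fin n) =>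
      gtil q.1 q.2) := by
    have : (fun q : ProbabilityMeasure (U × Y) × EuclideanSpace ℝ (Fin n) => gtil q.1 q.2)
        = fun q => ∫ w : U × Y, g (w.1, w.2, q.2) ∂q.1.toMeasure := by
      funext q; exact hgtil q.1 q.2
    rw [this]
    exact aux_gtil_cont g hg
  have hgradc : Continuous (gradient ψ) := by
    have : gradient ψ = fun x => (InnerProductSpace.toDual ℝ
        (EuclideanSpace ℝ (Fin n))).symm (fderiv ℝ ψ x) := rfl
    rw [this]
    exact (InnerProductSpace.toDual ℝ _).symm.continuous.comp (hψ.continuous_fderiv one_ne_zero)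
  set h : C(ProbabilityMeasure (U × Y) × EuclideanSpace ℝ (Fin n), ℝ) :=
    ⟨fun w => ⟪gradient ψ w.2, gtil w.1 w.2⟫,
      (hgradc.comp continuous_snd).inner hgtilc⟩ with hdef
  have hlim1 := hp h
  -- the time averages tend to zero
  have hkey : ∀ T ≥ (0:ℝ), (∫ t in (0:ℝ)..T, h (μ t, z t)) = ψ (z T) - ψ (z 0) := by
    intro T hT
    exact aux_key_ftc ψ hψ Z hZ z (fun t => gtil (μ t) (z t)) hmemZ hint hode T hT
  obtain ⟨B, hB⟩ := hZ.exists_bound_of_continuousOn hψ.continuous.continuousOn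
  have hlim2 : Tendsto (fun T : ℝ => (1 / T) * ∫ t in (0:ℝ)..T, h (μ t, z t)) atTop
      (nhds 0) := by
    have hb : Tendsto (fun T : ℝ => (1 / T) * (2 * B)) atTop (nhds 0) := by
      have h0 : Tendsto (fun T : ℝ => (1 / T)) atTop (nhds 0) := by
        simpa [one_div] using tendsto_inv_atTop_zero
      simpa using h0.mul_const (2 * B)
    apply squeeze_zero_norm' ?_ hb
    · filter_upwards [eventually_ge_atTop (1:ℝ)] with T hT1
      have hT0 : (0:ℝ) ≤ T := le_trans zero_le_one hT1
      rw [hkey T hT0]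
      have h1 : ‖ψ (z T) - ψ (z 0)‖ ≤ 2 * B := by
        calc ‖ψ (z T) - ψ (z 0)‖ ≤ ‖ψ (z T)‖ + ‖ψ (z 0)‖ := norm_sub_le _ _
          _ ≤ 2 * B := by
            have := hB (z T) (hmemZ T hT0)
            have := hB (z 0) (hmemZ 0 le_rfl)
            linarith
      rw [norm_mul]
      apply mul_le_mul _ h1 (norm_nonneg _) _
      · rw [Real.norm_eq_abs, abs_of_nonneg (by positivity)]
      · positivity
  have := tendsto_nhds_unique hlim1 hlim2
  simpa [hdef] using this
end
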